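/- Let E be an inner product space over ℂ and let μ̄, ∂̄, ∂, μ, μ̄*, ∂̄*, ∂*, μ*, Λ be ℂ-linear endomorphisms of E such that: (adjointness) for all x, y in E one has ⟪μ̄ x, y⟫ = ⟪x, μ̄* y⟫, ⟪∂̄ x, y⟫ = ⟪x, ∂̄* y⟫, ⟪∂ x, y⟫ = ⟪x, ∂* y⟫, ⟪μ x, y⟫ = ⟪x, μ* y⟫; (almost Kähler identities) Λ∘μ̄ − μ̄∘Λ = i·μ*, Λ∘μ − μ∘Λ = −i·μ̄*, Λ∘∂̄ − ∂̄∘Λ = −i·∂*, Λ∘∂ − ∂∘Λ = i·∂̄*; and (d² = 0 relation) μ∘μ̄ + μ̄∘μ + ∂∘∂̄ + ∂̄∘∂ = 0. Writing Δ_δ := δ∘δ* + δ*∘δ for each pair, then for every x ∈ E the following are equivalent: (Δ_∂̄ + Δ_μ) x = 0; (Δ_∂ + Δ_μ̄) x = 0; (Δ_μ̄ + Δ_∂̄ + Δ_∂ + Δ_μ) x = 0; all eight operators μ̄, ∂̄, ∂, μ, μ̄*, ∂̄*, ∂*, μ* annihilate x. Moreover any such x satisfies (μ̄ + ∂̄ +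 ∂ + μ) x = 0 and (μ̄* + ∂̄* + ∂* + μ*) x = 0. -/

import Mathlib

private lemma aux_kill {E : Type*} [NormedAddCommGroup E] [InnerProductSpace ℂ E]
    (f fs g gs : E →ₗ[ℂ] E)
    (hf : ∀ a b : E, (inner ℂ (f a) b : ℂ) = inner ℂ a (fs b))
    (hg : ∀ a b : E, (inner ℂ (g a) b : ℂ) = inner ℂ a (gs b))
    (x : E) (hx : ((f ∘ₗ fs + fs ∘ₗ f) + (g ∘ₗ gs + gs ∘ₗ g)) x = 0) :
    f x = 0 ∧ fs x = 0 ∧ g x = 0 ∧ gs x = 0 := by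
  have h0 : (inner ℂ (((f ∘ₗ fs + fs ∘ₗ f) + (g ∘ₗ gs + gs ∘ₗ g)) x) x : ℂ) = 0 := by
    rw [hx]; simp
  simp only [LinearMap.add_apply, LinearMap.comp_apply, inner_add_left] at h0
  have c1 : (inner ℂ (fs (f x)) x : ℂ) = inner ℂ (f x) (f x) := by
    rw [← inner_conj_symm, ← hf x (f x), inner_conj_symm]
  have c2 : (inner ℂ (gs (g x)) x : ℂ) = inner ℂ (g x) (g x) := by
    rw [← inner_conj_symm, ← hg x (g x), inner_conj_symm]
  rw [hf (fs x) x, hg (gs x) x, c1, c2] at h0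
  simp only [inner_self_eq_norm_sq_to_K] at h0
  have hr : ‖fs x‖ ^ 2 + ‖f x‖ ^ 2 + (‖gs x‖ ^ 2 + ‖g x‖ ^ 2) = 0 := by
    exact_mod_cast congrArg RCLike.re h0
  refine ⟨norm_eq_zero.1 ?_, norm_eq_zero.1 ?_, norm_eq_zero.1 ?_, norm_eq_zero.1 ?_⟩ <;>
    nlinarith [sq_nonneg ‖f x‖, sq_nonneg ‖fs x‖, sq_nonneg ‖g x‖, sq_nonneg ‖gs x‖,
      norm_nonneg (f x), norm_nonneg (fs x), norm_nonneg (g x), norm_nonneg (gs x)]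

/-- Operator-theoretic core of Theorem 4.1: on an inner product space over ℂ with
operators `μ̄, ∂̄, ∂, μ` (here `mb, pb, p, m`), their adjoints `mbs, pbs, ps, ms`,
and `Λ` satisfying the almost Kähler identities and the bidegree `(1,1)` part of
`d² = 0`, the conditions `(Δ_∂̄ + Δ_μ) x = 0`, `(Δ_∂ + Δ_μ̄) x = 0`,
`(Δ_μ̄ + Δ_∂̄ + Δ_∂ + Δ_μ) x = 0`, and annihilation of `x` by all eight operators
are equivalent; moreover any such `x` is killed by `d = μ̄ + ∂̄ + ∂ + μ` and
`d* = μ̄* + ∂̄* + ∂* + μ*`. -/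
theorem stmt_0 {E : Type*} [NormedAddCommGroup E] [InnerProductSpace ℂ E]
    (mb pb p m mbs pbs ps ms Λ : E →ₗ[ℂ] E)
    (hmb : ∀ x y : E, (inner ℂ (mb x) y : ℂ) = inner ℂ x (mbs y))
    (hpb : ∀ x y : E, (inner ℂ (pb x) y : ℂ) = inner ℂ x (pbs y))
    (hp : ∀ x y : E, (inner ℂ (p x) y : ℂ) = inner ℂ x (ps y))
    (hm : ∀ x y : E, (inner ℂ (m x) y : ℂ) = inner ℂ x (ms y))
    (h1 : Λ ∘ₗ mb - mb ∘ₗ Λ = Complex.I • ms)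
    (h2 : Λ ∘ₗ m - m ∘ₗ Λ = -(Complex.I • mbs))
    (h3 : Λ ∘ₗ pb - pb ∘ₗ Λ = -(Complex.I • ps))
    (h4 : Λ ∘ₗ p - p ∘ₗ Λ = Complex.I • pbs)
    (h5 : m ∘ₗ mb + mb ∘ₗ m + p ∘ₗ pb + pb ∘ₗ p = 0)
    (x : E) :
    (((pb ∘ₗ pbs + pbs ∘ₗ pb) + (m ∘ₗ ms + ms ∘ₗ m)) x = 0 ↔
      ((p ∘ₗ ps + ps ∘ₗ p) + (mb ∘ₗ mbs + mbs ∘ₗ mb)) x = 0) ∧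
    (((pb ∘ₗ pbs + pbs ∘ₗ pb) + (m ∘ₗ ms + ms ∘ₗ m)) x = 0 ↔
      ((mb ∘ₗ mbs + mbs ∘ₗ mb) + (pb ∘ₗ pbs + pbs ∘ₗ pb)
        + (p ∘ₗ ps + ps ∘ₗ p) + (m ∘ₗ ms + ms ∘ₗ m)) x = 0) ∧
    (((pb ∘ₗ pbs + pbs ∘ₗ pb) + (m ∘ₗ ms + ms ∘ₗ m)) x = 0 ↔
      (mb x = 0 ∧ pb x = 0 ∧ p x = 0 ∧ m x = 0 ∧
        mbs x = 0 ∧ pbs x = 0 ∧ ps x = 0 ∧ ms x = 0)) ∧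
    (((pb ∘ₗ pbs + pbs ∘ₗ pb) + (m ∘ₗ ms + ms ∘ₗ m)) x = 0 →
      (mb + pb + p + m) x = 0 ∧ (mbs + pbs + ps + ms) x = 0) := by
  simp only [← Module.End.mul_eq_comp] at h1 h2 h3 h4 h5
  -- solve for the adjoints
  have e1 : ms = (-Complex.I) • (Λ * mb - mb * Λ) := by
    rw [h1, smul_smul, neg_mul, Complex.I_mul_I, neg_neg, one_smul]
  have e2 : mbs = Complex.I • (Λ * m - m * Λ) := by
    rw [h2, smul_neg, smul_smul, Complex.I_mul_I, neg_smul, one_smul, neg_neg]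
  have e3 : ps = Complex.I • (Λ * pb - pb * Λ) := by
    rw [h3, smul_neg, smul_smul, Complex.I_mul_I, neg_smul, one_smul, neg_neg]
  have e4 : pbs = (-Complex.I) • (Λ * p - p * Λ) := by
    rw [h4, smul_smul, neg_mul, Complex.I_mul_I, neg_neg, one_smul]
  -- the two Laplacians agree
  have opEq : (pb ∘ₗ pbs + pbs ∘ₗ pb) + (m ∘ₗ ms + ms ∘ₗ m)
      = (p ∘ₗ ps + ps ∘ₗ p) + (mb ∘ₗ mbs + mbs ∘ₗ mb) := by
    simp only [← Module.End.mul_eq_comp]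
    rw [e1, e2, e3, e4]
    have hS : Λ * (m * mb + mb * m + p * pb + pb * p)
        - (m * mb + mb * m + p * pb + pb * p) * Λ = 0 := by rw [h5]; simp
    have expand : pb * ((-Complex.I) • (Λ*p - p*Λ)) + ((-Complex.I) • (Λ*p - p*Λ)) * pb
        + (m * ((-Complex.I) • (Λ*mb - mb*Λ)) + ((-Complex.I) • (Λ*mb - mb*Λ)) * m)
        - (p * (Complex.I • (Λ*pb - pb*Λ)) + (Complex.I • (Λ*pb - pb*Λ)) * p
        + (mb * (Complex.I • (Λ*m - m*Λ)) + (Complex.I • (Λ*m - m*Λ)) * mb))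
        = (-Complex.I) • (Λ * (m * mb + mb * m + p * pb + pb * p)
          - (m * mb + mb * m + p * pb + pb * p) * Λ) := by
      noncomm_ring
      match_scalars <;> simp
    rw [hS, smul_zero, sub_eq_zero] at expand
    exact expand
  have hBA : ((p ∘ₗ ps + ps ∘ₗ p) + (mb ∘ₗ mbs + mbs ∘ₗ mb)) x
      = ((pb ∘ₗ pbs + pbs ∘ₗ pb) + (m ∘ₗ ms + ms ∘ₗ m)) x :=
    (LinearMap.congr_fun opEq x).symm
  have hC : (mb ∘ₗ mbs + mbs ∘ₗ mb) + (pb ∘ₗ pbs + pbs ∘ₗ pb)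
      + (p ∘ₗ ps + ps ∘ₗ p) + (m ∘ₗ ms + ms ∘ₗ m)
      = ((pb ∘ₗ pbs + pbs ∘ₗ pb) + (m ∘ₗ ms + ms ∘ₗ m))
        + ((p ∘ₗ ps + ps ∘ₗ p) + (mb ∘ₗ mbs + mbs ∘ₗ mb)) := by abel
  refine ⟨?_, ?_, ?_, ?_⟩
  · rw [hBA]
  · constructor
    · intro h
      rw [hC, LinearMap.add_apply, h, hBA.trans h, add_zero]
    · intro h
      rw [hC, LinearMap.add_apply, hBA] at h
      have h2 : (2 : ℂ) • (((pb ∘ₗ pbs + pbs ∘ₗ pb) + (m ∘ₗ ms + ms ∘ₗ m)) x) = 0 := by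
        rw [two_smul]; exact h
      exact (smul_eq_zero.1 h2).resolve_left two_ne_zero
  · constructor
    · intro h
      obtain ⟨hpb0, hpbs0, hm0, hms0⟩ := aux_kill pb pbs m ms hpb hm x h
      obtain ⟨hp0, hps0, hmb0, hmbs0⟩ := aux_kill p ps mb mbs hp hmb x (hBA.trans h)
      exact ⟨hmb0, hpb0, hp0, hm0, hmbs0, hpbs0, hps0, hms0⟩
    · rintro ⟨a1, a2, a3, a4, a5, a6, a7, a8⟩
      simp [LinearMap.add_apply, LinearMap.comp_apply, a1, a2, a3, a4, a5, a6, a7, a8]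
  · intro h
    obtain ⟨hpb0, hpbs0, hm0, hms0⟩ := aux_kill pb pbs m ms hpb hm x h
    obtain ⟨hp0, hps0, hmb0, hmbs0⟩ := aux_kill p ps mb mbs hp hmb x (hBA.trans h)
    constructor <;> simp [LinearMap.add_apply, hpb0, hpbs0, hm0, hms0, hp0, hps0, hmb0, hmbs0]
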